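/- Let (R, M) be a commutative local ring such that M = Rx is principal. If every prime ideal of R is a direct sum of cyclic R-modules, then every non-maximal prime ideal of R is zero; in particular, if R has a non-maximal prime, then R is a principal ideal domain. -/

import Mathlib

/-- An ideal `P` of a commutative ring `R` is an internal direct sum of cyclic
`R`-modules: there is a family of elements of `P` whose cyclic spans are
independent and whose supremum is `P`. -/
def IsDirectSumOfCyclics {R : Type} [CommRing R] (P : Ideal R) : Prop :=
  ∃ (ι : Type) (w : ι → R), (∀ i, w i ∈ P) ∧
    iSupIndep (fun i => Ideal.span {w i}) ∧ (⨆ i, Ideal.span {w i}) = P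

theorem nonmaximal_primes_zero_of_principal_maximal_ideal
    {R : Type} [CommRing R] [IsLocalRing R] (x : R)
    (hx : IsLocalRing.maximalIdeal R = Ideal.span {x})
    (h : ∀ P : Ideal R, P.IsPrime → IsDirectSumOfCyclics P) :
    (∀ P : Ideal R, P.IsPrime → ¬ P.IsMaximal → P = ⊥) ∧
    ((∃ P : Ideal R, P.IsPrime ∧ ¬ P.IsMaximal) →
      IsPrincipalIdealRing R ∧ IsDomain R) := by
  have main : ∀ P : Ideal R, P.IsPrime → ¬ P.IsMaximal → P = ⊥ := by
    intro P hP hPm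
    obtain ⟨ι, w, hw, hind, hsup⟩ := h P hP
    have hxP : x ∉ P := by
      intro hxP
      apply hPm
      have : P = IsLocalRing.maximalIdeal R := le_antisymm
        (IsLocalRing.le_maximalIdeal hP.ne_top)
        (by rw [hx]; exact (Ideal.span_singleton_le_iff_mem P).mpr hxP)
      rw [this]; exact IsLocalRing.maximalIdeal.isMaximal R
    have hw0 : ∀ i, w i = 0 := by
      intro i
      set S : Ideal R := ⨆ j, ⨆ (_ : j ≠ i), Ideal.span {w j} with hS
      -- every element of the iSup differs from a multiple of w i by an element of S
      have key : ∀ r, r ∈ (⨆ j, Ideal.span {w j}) → ∃ c : R, r - c * w i ∈ S := by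
        intro r hr
        refine Submodule.iSup_induction' (p := fun j => Ideal.span {w j})
          (motive := fun r _ => ∃ c : R, r - c * w i ∈ S) ?_ ⟨0, by simp⟩ ?_ hr
        · intro j r hrj
          by_cases hji : j = i
          · subst hji
            obtain ⟨c, hc⟩ := Ideal.mem_span_singleton'.mp hrj
            exact ⟨c, by rw [hc]; simp⟩
          · refine ⟨0, ?_⟩
            simp only [zero_mul, sub_zero]
            exact Submodule.mem_iSup_of_mem j (Submodule.mem_iSup_of_mem hji hrj)
        · rintro a b ha hb ⟨c1, hc1⟩ ⟨c2, hc2⟩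
          refine ⟨c1 + c2, ?_⟩
          have : a + b - (c1 + c2) * w i = (a - c1 * w i) + (b - c2 * w i) := by ring
          rw [this]; exact add_mem hc1 hc2
      -- w i = x * r with r ∈ P
      have hwiM : w i ∈ Ideal.span {x} := by
        rw [← hx]; exact IsLocalRing.le_maximalIdeal hP.ne_top (hw i)
      obtain ⟨r, hr⟩ := Ideal.mem_span_singleton'.mp hwiM
      have hrP : r ∈ P := by
        rcases hP.mem_or_mem (show x * r ∈ P by rw [mul_comm, hr]; exact hw i) with h' | h'
        · exact absurd h' hxP
        · exact h'
      obtain ⟨c, hc⟩ := key r (hsup ▸ hrP)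
      -- (1 - x*c) * w i ∈ span {w i} ⊓ S = ⊥
      have hmem : (1 - x * c) * w i ∈ Ideal.span {w i} ⊓ S := by
        constructor
        · exact Ideal.mul_mem_left _ _ (Ideal.mem_span_singleton_self _)
        · have : (1 - x * c) * w i = x * (r - c * w i) := by
            linear_combination -hr
          rw [this]
          exact Ideal.mul_mem_left _ _ hc
      have hdisj : Disjoint (Ideal.span {w i}) S := hind i
      have hz : (1 - x * c) * w i = 0 := by
        have := hdisj.le_bot hmem
        simpa using this
      have hu : IsUnit (1 - x * c) := by
        apply IsLocalRing.isUnit_one_sub_self_of_mem_nonunits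
        rw [← IsLocalRing.mem_maximalIdeal, hx]
        exact Ideal.mul_mem_right _ _ (Ideal.mem_span_singleton_self _)
      obtain ⟨u, hu'⟩ := hu
      calc w i = ↑u⁻¹ * (↑u * w i) := by rw [← mul_assoc]; simp
        _ = 0 := by rw [hu', hz, mul_zero]
    rw [← hsup]
    simp [hw0]
  refine ⟨main, ?_⟩
  rintro ⟨P, hP, hPm⟩
  have hbot : (⊥ : Ideal R).IsPrime := main P hP hPm ▸ hP
  haveI : NoZeroDivisors R := ⟨fun {a b} hab => by
    rcases hbot.mem_or_mem (show a * b ∈ (⊥ : Ideal R) from hab) with h' | h'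
    · exact Or.inl h'
    · exact Or.inr h'⟩
  haveI : IsDomain R := NoZeroDivisors.to_isDomain R
  refine ⟨?_, inferInstance⟩
  apply IsPrincipalIdealRing.of_prime
  intro Q hQ
  by_cases hQm : Q.IsMaximal
  · have : Q = IsLocalRing.maximalIdeal R := IsLocalRing.eq_maximalIdeal hQm
    rw [this, hx]; exact ⟨x, rfl⟩
  · rw [main Q hQ hQm]; exact ⟨0, (Ideal.span_singleton_eq_bot.mpr rfl).symm⟩
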